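/- For every integer k ≥ 1, the Reeve simplex P_k = conv{(0,0,0), (1,0,0), (0,1,0), (1,1,k)} ⊆ ℝ^3 contains exactly 4 lattice points (namely its vertices) and has Euclidean volume k/6, i.e. normalized volume k. In particular, the number of lattice points of a lattice polytope does not bound its volume. -/

import Mathlib

open Set MeasureTheory
open scoped ENNReal

/-- A point of `ℝ^3` is a lattice point if all coordinates are integers. -/
def IsLatticePoint (x : Fin 3 → ℝ) : Prop := ∀ i, ∃ z : ℤ, x i = (z : ℝ)

/-- The set of lattice points of `ℝ^3`. -/
def LatticePts : Set (Fin 3 → ℝ) := {x | IsLatticePoint x}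

/-- The Reeve simplex: conv{(0,0,0), (1,0,0), (0,1,0), (1,1,k)}. -/
noncomputable def reeveSimplex (k : ℕ) : Set (Fin 3 → ℝ) :=
  convexHull ℝ {![0, 0, 0], ![1, 0, 0], ![0, 1, 0], ![1, 1, (k : ℝ)]}

def Svol (k : ℕ) : Set (Fin 3 → ℝ) :=
  {x | 0 ≤ x 2 ∧ x 2 ≤ k * x 0 ∧ x 2 ≤ k * x 1 ∧ k * (x 0 + x 1) ≤ k + x 2}

lemma reeve_eq (k : ℕ) (hk : 1 ≤ k) : reeveSimplex k = Svol k := by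
  have kpos : (0:ℝ) < k := by exact_mod_cast hk
  apply Subset.antisymm
  · apply convexHull_min
    · rintro v (rfl | rfl | rfl | rfl) <;>
        refine ⟨?_, ?_, ?_, ?_⟩ <;> simp [Svol] <;> nlinarith
    · intro x hx y hy a b ha hb hab
      obtain ⟨hx1, hx2, hx3, hx4⟩ := hx
      obtain ⟨hy1, hy2, hy3, hy4⟩ := hy
      refine ⟨?_, ?_, ?_, ?_⟩ <;>
        simp only [Pi.add_apply, Pi.smul_apply, smul_eq_mul] <;> nlinarith
  · intro x hx
    obtain ⟨h1, h2, h3, h4⟩ := hx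
    set c : ℝ := x 2 / k with hcdef
    have hc : (k:ℝ) * c = x 2 := by rw [hcdef]; field_simp
    have hc0 : 0 ≤ c := div_nonneg h1 kpos.le
    have hc1 : c ≤ x 0 := by rw [hcdef, div_le_iff₀ kpos]; linarith
    have hc2 : c ≤ x 1 := by rw [hcdef, div_le_iff₀ kpos]; linarith
    have hc3 : x 0 + x 1 ≤ 1 + c := by nlinarith
    set w : Fin 4 → ℝ := ![1 - x 0 - x 1 + c, x 0 - c, x 1 - c, c] with hw
    set z : Fin 4 → (Fin 3 → ℝ) := ![![0,0,0], ![1,0,0], ![0,1,0], ![1,1,(k:ℝ)]] with hz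
    have hw0 : ∀ i ∈ Finset.univ, 0 ≤ w i := by
      intro i _
      fin_cases i <;> simp [hw] <;> linarith
    have hws : ∑ i, w i = 1 := by
      simp [hw, Fin.sum_univ_four]; ring
    have hx_eq : Finset.univ.centerMass w z = x := by
      rw [Finset.centerMass_eq_of_sum_1 _ _ hws]
      funext i
      fin_cases i <;>
        simp [hw, hz, Fin.sum_univ_four, Matrix.vecHead, Matrix.vecTail] <;>
        ring_nf <;> field_simp <;> linarith [hc]
    rw [← hx_eq]
    exact Finset.centerMass_mem_convexHull _ hw0 (by rw [hws]; norm_num)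
      (by intro i _; fin_cases i <;> simp [hz])

lemma lattice_eq (k : ℕ) (hk : 1 ≤ k) :
    reeveSimplex k ∩ LatticePts =
      ({![0, 0, 0], ![1, 0, 0], ![0, 1, 0], ![1, 1, (k : ℝ)]} : Set (Fin 3 → ℝ)) := by
  have kpos : (0:ℝ) < k := by exact_mod_cast hk
  apply Subset.antisymm
  · rintro x ⟨hxS, hxL⟩
    rw [reeve_eq k hk] at hxS
    obtain ⟨h1, h2, h3, h4⟩ := hxS
    obtain ⟨p, hp⟩ := hxL 0
    obtain ⟨q, hq⟩ := hxL 1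
    obtain ⟨r, hr⟩ := hxL 2
    rw [hp] at h2 h4; rw [hq] at h3 h4; rw [hr] at h1 h2 h3 h4
    -- integer inequalities
    have hkk : (1:ℤ) ≤ (k:ℤ) := by exact_mod_cast hk
    have i1 : (0:ℤ) ≤ r := by exact_mod_cast h1
    have i2 : r ≤ (k:ℤ) * p := by exact_mod_cast h2
    have i3 : r ≤ (k:ℤ) * q := by exact_mod_cast h3
    have i4 : (k:ℤ) * (p + q) ≤ (k:ℤ) + r := by exact_mod_cast h4
    have hx0 : x = ![(p:ℝ), (q:ℝ), (r:ℝ)] := by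
      funext i; fin_cases i <;> simp [hp, hq, hr]
    rcases eq_or_lt_of_le i1 with hr0 | hr1
    · -- r = 0
      have hr0 : r = 0 := hr0.symm
      subst hr0
      have hp0 : 0 ≤ p := by nlinarith
      have hq0 : 0 ≤ q := by nlinarith
      have hpq : p + q ≤ 1 := by nlinarith
      have hpu : p ≤ 1 := by omega
      have hqu : q ≤ 1 := by omega
      interval_cases p <;> interval_cases q <;>
        first
          | omega
          | (rw [hx0]; norm_num)
    · -- r ≥ 1
      have hp1 : 1 ≤ p := by nlinarith
      have hq1 : 1 ≤ q := by nlinarith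
      have hp2 : p ≤ 1 := by nlinarith
      have hq2 : q ≤ 1 := by nlinarith
      have hpe : p = 1 := le_antisymm hp2 hp1
      have hqe : q = 1 := le_antisymm hq2 hq1
      subst hpe; subst hqe
      have hre : r = (k:ℤ) := by nlinarith
      right; right; right
      rw [hx0, hre]; norm_num
  · rintro v (rfl | rfl | rfl | rfl) <;>
      refine ⟨subset_convexHull ℝ _ (by norm_num), ?_⟩ <;>
      intro i <;> fin_cases i
    · exact ⟨0, by norm_num⟩
    · exact ⟨0, by norm_num⟩
    · exact ⟨0, by norm_num⟩
    · exact ⟨1, by norm_num⟩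
    · exact ⟨0, by norm_num⟩
    · exact ⟨0, by norm_num⟩
    · exact ⟨0, by norm_num⟩
    · exact ⟨1, by norm_num⟩
    · exact ⟨0, by norm_num⟩
    · exact ⟨1, by norm_num⟩
    · exact ⟨1, by norm_num⟩
    · exact ⟨(k:ℤ), by norm_num⟩

lemma ncard4 (k : ℕ) (hk : 1 ≤ k) :
    ({![0, 0, 0], ![1, 0, 0], ![0, 1, 0], ![1, 1, (k : ℝ)]} : Set (Fin 3 → ℝ)).ncard = 4 := by
  have kpos : (0:ℝ) < k := by exact_mod_cast hk
  have h1 : (![0,0,0] : Fin 3 → ℝ) ≠ ![1,0,0] := by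
    intro h; have := congrFun h 0; norm_num at this
  have h2 : (![0,0,0] : Fin 3 → ℝ) ≠ ![0,1,0] := by
    intro h; have := congrFun h 1; norm_num at this
  have h3 : (![0,0,0] : Fin 3 → ℝ) ≠ ![1,1,(k:ℝ)] := by
    intro h; have := congrFun h 0; norm_num at this
  have h4 : (![1,0,0] : Fin 3 → ℝ) ≠ ![0,1,0] := by
    intro h; have := congrFun h 0; norm_num at this
  have h5 : (![1,0,0] : Fin 3 → ℝ) ≠ ![1,1,(k:ℝ)] := by
    intro h; have := congrFun h 1; norm_num at this
  have h6 : (![0,1,0] : Fin 3 → ℝ) ≠ ![1,1,(k:ℝ)] := by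
    intro h; have := congrFun h 0; norm_num at this
  rw [Set.ncard_insert_of_notMem (by simp [h1, h2, h3]),
      Set.ncard_insert_of_notMem (by simp [h4, h5]),
      Set.ncard_insert_of_notMem (by simp [h6]),
      Set.ncard_singleton]

/-! ### Volume -/

def OrdP (σ : Equiv.Perm (Fin 3)) : Set (Fin 3 → ℝ) :=
  {x | 0 ≤ x (σ 0) ∧ x (σ 0) ≤ x (σ 1) ∧ x (σ 1) ≤ x (σ 2) ∧ x (σ 2) ≤ 1}

lemma measurable_OrdP (σ : Equiv.Perm (Fin 3)) : MeasurableSet (OrdP σ) := by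
  apply MeasurableSet.inter
  · exact measurableSet_le measurable_const (measurable_pi_apply _)
  apply MeasurableSet.inter
  · exact measurableSet_le (measurable_pi_apply _) (measurable_pi_apply _)
  apply MeasurableSet.inter
  · exact measurableSet_le (measurable_pi_apply _) (measurable_pi_apply _)
  · exact measurableSet_le (measurable_pi_apply _) measurable_const

lemma vol_OrdP (σ : Equiv.Perm (Fin 3)) :
    volume (OrdP σ) = volume (OrdP (Equiv.refl (Fin 3))) := by
  have hmp := volume_measurePreserving_piCongrLeft (fun _ : Fin 3 => ℝ) σ.symm
  have hpre : (MeasurableEquiv.piCongrLeft (fun _ : Fin 3 => ℝ) σ.symm) ⁻¹'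
      (OrdP (Equiv.refl (Fin 3))) = OrdP σ := by
    ext x
    simp only [OrdP, Set.mem_preimage, Set.mem_setOf_eq, MeasurableEquiv.coe_piCongrLeft,
      Equiv.piCongrLeft_apply_eq_cast, Equiv.refl_apply]
    simp [Equiv.piCongrLeft_apply_apply]
  rw [← hpre, hmp.measure_preimage (measurable_OrdP _).nullMeasurableSet]

def mkP (f g : Fin 3 → Fin 3) (h1 : Function.LeftInverse g f) (h2 : Function.RightInverse g f) :
    Equiv.Perm (Fin 3) := ⟨f, g, h1, h2⟩

lemma cube_eq_union :
    (Set.univ.pi fun _ : Fin 3 => Icc (0:ℝ) 1) = ⋃ σ : Equiv.Perm (Fin 3), OrdP σ := by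
  apply Subset.antisymm
  · intro x hx
    simp only [Set.mem_pi, Set.mem_univ, forall_true_left, Set.mem_Icc] at hx
    obtain ⟨l0, u0⟩ := hx 0
    obtain ⟨l1, u1⟩ := hx 1
    obtain ⟨l2, u2⟩ := hx 2
    simp only [Set.mem_iUnion]
    rcases le_total (x 0) (x 1) with h01 | h01 <;>
      rcases le_total (x 0) (x 2) with h02 | h02 <;>
      rcases le_total (x 1) (x 2) with h12 | h12
    · exact ⟨mkP ![0,1,2] ![0,1,2] (by decide) (by decide), by
        refine ⟨?_, ?_, ?_, ?_⟩ <;> simp [OrdP, mkP] <;> linarith⟩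
    · exact ⟨mkP ![0,2,1] ![0,2,1] (by decide) (by decide), by
        refine ⟨?_, ?_, ?_, ?_⟩ <;> simp [OrdP, mkP] <;> linarith⟩
    · exact ⟨mkP ![0,1,2] ![0,1,2] (by decide) (by decide), by
        refine ⟨?_, ?_, ?_, ?_⟩ <;> simp [OrdP, mkP] <;> linarith⟩
    · exact ⟨mkP ![2,0,1] ![1,2,0] (by decide) (by decide), by
        refine ⟨?_, ?_, ?_, ?_⟩ <;> simp [OrdP, mkP] <;> linarith⟩
    · exact ⟨mkP ![1,0,2] ![1,0,2] (by decide) (by decide), by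
        refine ⟨?_, ?_, ?_, ?_⟩ <;> simp [OrdP, mkP] <;> linarith⟩
    · exact ⟨mkP ![1,0,2] ![1,0,2] (by decide) (by decide), by
        refine ⟨?_, ?_, ?_, ?_⟩ <;> simp [OrdP, mkP] <;> linarith⟩
    · exact ⟨mkP ![1,2,0] ![2,0,1] (by decide) (by decide), by
        refine ⟨?_, ?_, ?_, ?_⟩ <;> simp [OrdP, mkP] <;> linarith⟩
    · exact ⟨mkP ![2,1,0] ![2,1,0] (by decide) (by decide), by
        refine ⟨?_, ?_, ?_, ?_⟩ <;> simp [OrdP, mkP] <;> linarith⟩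
  · intro x hx
    simp only [Set.mem_iUnion] at hx
    obtain ⟨σ, h1, h2, h3, h4⟩ := hx
    have key : ∀ j : Fin 3, x (σ j) ∈ Icc (0:ℝ) 1 := by
      intro j
      have e : j = 0 ∨ j = 1 ∨ j = 2 := by fin_cases j <;> simp
      rcases e with rfl | rfl | rfl <;> exact ⟨by linarith, by linarith⟩
    intro i _
    have := key (σ.symm i)
    rwa [Equiv.apply_symm_apply] at this

lemma null_eq (i j : Fin 3) (hij : i ≠ j) : volume {x : Fin 3 → ℝ | x i = x j} = 0 := by
  set φ : (Fin 3 → ℝ) →ₗ[ℝ] ℝ := (LinearMap.proj i : (Fin 3 → ℝ) →ₗ[ℝ] ℝ) - (LinearMap.proj j : (Fin 3 → ℝ) →ₗ[ℝ] ℝ) with hφ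
  have hker : {x : Fin 3 → ℝ | x i = x j} = (LinearMap.ker φ : Set (Fin 3 → ℝ)) := by
    ext x
    simp [hφ, LinearMap.mem_ker, sub_eq_zero]
  rw [hker]
  apply Measure.addHaar_submodule
  intro htop
  have : φ = 0 := LinearMap.ker_eq_top.mp htop
  have h1 : φ (Pi.single i 1) = 1 := by
    simp [hφ, Pi.single_apply, hij, (Ne.symm hij)]
  rw [this] at h1
  simp at h1

lemma inter_subset_N {σ τ : Equiv.Perm (Fin 3)} (h : σ ≠ τ) :
    OrdP σ ∩ OrdP τ ⊆ {x : Fin 3 → ℝ | x 0 = x 1} ∪ {x | x 0 = x 2} ∪ {x | x 1 = x 2} := by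
  rintro x ⟨hσ, hτ⟩
  by_contra hN
  simp only [Set.mem_union, Set.mem_setOf_eq, not_or] at hN
  obtain ⟨⟨n01, n02⟩, n12⟩ := hN
  have xinj : ∀ i j : Fin 3, x i = x j → i = j := by
    intro i j hxy
    by_contra hne
    fin_cases i <;> fin_cases j <;> simp_all
  have key : ∀ ρ : Equiv.Perm (Fin 3), x ∈ OrdP ρ →
      (∀ i, x (ρ 0) ≤ x i) ∧ (∀ i, x i ≤ x (ρ 2)) := by
    rintro ρ ⟨k1, k2, k3, k4⟩
    constructor <;> intro i <;>
    · obtain ⟨j, rfl⟩ : ∃ j, i = ρ j := ⟨ρ.symm i, (Equiv.apply_symm_apply ρ i).symm⟩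
      have e : j = 0 ∨ j = 1 ∨ j = 2 := by fin_cases j <;> simp
      rcases e with rfl | rfl | rfl <;> linarith
  obtain ⟨minσ, maxσ⟩ := key σ hσ
  obtain ⟨minτ, maxτ⟩ := key τ hτ
  have e0 : σ 0 = τ 0 := xinj _ _ (le_antisymm (minσ (τ 0)) (minτ (σ 0)))
  have e2 : σ 2 = τ 2 := xinj _ _ (le_antisymm (maxτ (σ 2)) (maxσ (τ 2)))
  have e1 : σ 1 = τ 1 := by
    have a0 : τ.symm (σ 1) ≠ 0 := by
      intro hh
      have h' : σ 1 = τ 0 := by rw [← hh, Equiv.apply_symm_apply]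
      rw [← e0] at h'
      exact (by decide : (1:Fin 3) ≠ 0) (σ.injective h')
    have a2 : τ.symm (σ 1) ≠ 2 := by
      intro hh
      have h' : σ 1 = τ 2 := by rw [← hh, Equiv.apply_symm_apply]
      rw [← e2] at h'
      exact (by decide : (1:Fin 3) ≠ 2) (σ.injective h')
    have a1 : τ.symm (σ 1) = 1 := by
      generalize τ.symm (σ 1) = m at a0 a2
      fin_cases m <;> simp_all
    have := congrArg τ a1
    rwa [Equiv.apply_symm_apply] at this
  refine h (Equiv.ext fun i => ?_)
  have e : i = 0 ∨ i = 1 ∨ i = 2 := by fin_cases i <;> simp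
  rcases e with rfl | rfl | rfl <;> assumption

lemma vol_Ord : volume (OrdP (Equiv.refl (Fin 3))) = 1 / 6 := by
  have hN : volume ({x : Fin 3 → ℝ | x 0 = x 1} ∪ {x | x 0 = x 2} ∪ {x | x 1 = x 2}) = 0 := by
    refine measure_union_null (measure_union_null ?_ ?_) ?_ <;> apply null_eq <;> decide
  have hd : (↑(Finset.univ : Finset (Equiv.Perm (Fin 3))) : Set (Equiv.Perm (Fin 3))).Pairwise
      (Function.onFun (AEDisjoint volume) OrdP) := by
    intro σ _ τ _ hst
    exact measure_mono_null (inter_subset_N hst) hN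
  have hcube : volume (Set.univ.pi fun _ : Fin 3 => Icc (0:ℝ) 1) = 1 := by
    rw [volume_pi_pi]; simp
  have h6 : (6 : ℝ≥0∞) * volume (OrdP (Equiv.refl (Fin 3))) = 1 := by
    have hu : (Set.univ.pi fun _ : Fin 3 => Icc (0:ℝ) 1) = ⋃ σ ∈ Finset.univ, OrdP σ := by
      rw [cube_eq_union]; simp
    rw [hu, measure_biUnion_finset₀ hd (fun σ _ => (measurable_OrdP σ).nullMeasurableSet)] at hcube
    simp_rw [vol_OrdP] at hcube
    rw [Finset.sum_const, Finset.card_univ] at hcube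
    rw [← hcube, Fintype.card_perm]
    norm_num [nsmul_eq_mul, Nat.factorial]
  exact (ENNReal.eq_div_iff (by norm_num) (by norm_num)).mpr h6

lemma image_eq (k : ℕ) (hk : 1 ≤ k) :
    Svol k = (Matrix.toLin' !![0,1,0;1,-1,1;(k:ℝ),0,0]) '' OrdP (Equiv.refl (Fin 3)) := by
  have kpos : (0:ℝ) < k := by exact_mod_cast hk
  have happ : ∀ z : Fin 3 → ℝ, (Matrix.toLin' !![0,1,0;1,-1,1;(k:ℝ),0,0]) z =
      ![z 1, z 0 - z 1 + z 2, k * z 0] := by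
    intro z
    funext i
    fin_cases i <;>
      simp [Matrix.toLin'_apply, Matrix.mulVec, dotProduct, Fin.sum_univ_three] <;> ring
  ext x
  constructor
  · rintro ⟨h1, h2, h3, h4⟩
    set c : ℝ := x 2 / k with hcdef
    have hc : (k:ℝ) * c = x 2 := by rw [hcdef]; field_simp
    have hc0 : 0 ≤ c := div_nonneg h1 kpos.le
    have hc1 : c ≤ x 0 := (mul_le_mul_iff_right₀ kpos).mp (by rw [hc]; exact h2)
    have hc2 : c ≤ x 1 := (mul_le_mul_iff_right₀ kpos).mp (by rw [hc]; exact h3)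
    have hc3 : x 0 + x 1 ≤ 1 + c := (mul_le_mul_iff_right₀ kpos).mp
      (by rw [mul_add (k:ℝ) 1 c, mul_one, hc]; exact h4)
    refine ⟨![c, x 0, x 0 + x 1 - c], ⟨?_, ?_, ?_, ?_⟩, ?_⟩
    · simpa using hc0
    · simpa using hc1
    · simp; linarith
    · simp; linarith
    · rw [happ]
      funext i
      fin_cases i <;> simp <;> linarith [hc]
  · rintro ⟨z, ⟨g1, g2, g3, g4⟩, rfl⟩
    rw [happ]
    simp only [Equiv.refl_apply] at g1 g2 g3 g4
    refine ⟨?_, ?_, ?_, ?_⟩ <;>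
      simp only [Matrix.cons_val_zero, Matrix.cons_val_one, Matrix.head_cons,
        Matrix.cons_val_two, Matrix.tail_cons] <;> nlinarith [kpos.le]

lemma det_A (k : ℕ) : LinearMap.det (Matrix.toLin' !![0,1,0;1,-1,1;(k:ℝ),0,0]) = k := by
  rw [LinearMap.det_toLin', Matrix.det_fin_three]
  simp

lemma vol_reeve (k : ℕ) (hk : 1 ≤ k) :
    volume (reeveSimplex k) = ENNReal.ofReal ((k : ℝ) / 6) := by
  rw [reeve_eq k hk, image_eq k hk, Measure.addHaar_image_linearMap, det_A, vol_Ord,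
    abs_of_nonneg (by positivity : (0:ℝ) ≤ (k:ℝ)),
    ENNReal.ofReal_div_of_pos (by norm_num : (0:ℝ) < 6)]
  norm_num [mul_one_div, div_eq_mul_inv]


/-- For every k ≥ 1 the Reeve simplex P_k contains exactly 4 lattice points, namely its
vertices, and has Euclidean volume k/6, i.e. normalized volume k. -/
theorem reeve_simplex_lattice_points_and_volume (k : ℕ) (hk : 1 ≤ k) :
    reeveSimplex k ∩ LatticePts =
      ({![0, 0, 0], ![1, 0, 0], ![0, 1, 0], ![1, 1, (k : ℝ)]} : Set (Fin 3 → ℝ)) ∧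
    (reeveSimplex k ∩ LatticePts).ncard = 4 ∧
    volume (reeveSimplex k) = ENNReal.ofReal ((k : ℝ) / 6) := by
  refine ⟨lattice_eq k hk, ?_, vol_reeve k hk⟩
  rw [lattice_eq k hk]
  exact ncard4 k hk
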